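/- The image of the Lagrangian handle Γ⁺(t) = ((μ+μ⁻¹)t, μt), μ = |t|², is a Lagrangian submanifold of (ℝ^{2(n-1)}, ω = Σᵢ dpᵢ ∧ dqᵢ): the pullback (Γ⁺)*ω vanishes identically on ℝ^{n-1} \ {0}. -/

import Mathlib

open Finset

/-- The image of the Lagrangian handle `Γ⁺(t) = ((μ+μ⁻¹)t, μt)`, `μ = |t|²`, is
Lagrangian for `ω = Σ dpᵢ ∧ dqᵢ`: the pullback `(Γ⁺)*ω` vanishes identically on
`ℝ^{n-1} \ {0}`. -/
theorem stmt5 (n : ℕ) (hn : 2 ≤ n)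
    (ω : ((Fin (n-1) → ℝ) × (Fin (n-1) → ℝ)) →
      ((Fin (n-1) → ℝ) × (Fin (n-1) → ℝ)) → ℝ)
    (hω : ∀ v w, ω v w = ∑ i, (v.2 i * w.1 i - w.2 i * v.1 i))
    (μ : (Fin (n-1) → ℝ) → ℝ) (hμ : ∀ t, μ t = ∑ i, (t i)^2)
    (Γ : (Fin (n-1) → ℝ) → (Fin (n-1) → ℝ) × (Fin (n-1) → ℝ))
    (hΓ : ∀ t, Γ t = ((μ t + (μ t)⁻¹) • t, μ t • t)) :
    ∀ t : Fin (n-1) → ℝ, t ≠ 0 → ∀ v w : Fin (n-1) → ℝ,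
      ω (fderiv ℝ Γ t v) (fderiv ℝ Γ t w) = 0 := by
  intro t ht v w
  have hμt : μ t ≠ 0 := by
    rw [hμ]
    have : 0 < ∑ i, (t i)^2 := by
      obtain ⟨i, hi⟩ : ∃ i, t i ≠ 0 := by
        by_contra h; push_neg at h; exact ht (funext h)
      exact Finset.sum_pos' (fun j _ => sq_nonneg _) ⟨i, Finset.mem_univ i, by positivity⟩
    exact ne_of_gt this
  set Dt : (Fin (n-1) → ℝ) →L[ℝ] ℝ :=
    ∑ i, (2 * t i) • (ContinuousLinearMap.proj i : (Fin (n-1) → ℝ) →L[ℝ] ℝ) with hDt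
  have hmu : HasFDerivAt μ Dt t := by
    have h := HasFDerivAt.fun_sum (u := (univ : Finset (Fin (n-1))))
      (fun i (_ : i ∈ univ) => (((ContinuousLinearMap.proj i : (Fin (n-1) → ℝ) →L[ℝ] ℝ).hasFDerivAt (x := t)).mul
        ((ContinuousLinearMap.proj i : (Fin (n-1) → ℝ) →L[ℝ] ℝ).hasFDerivAt (x := t))))
    have e1 : μ = fun x : Fin (n-1) → ℝ => ∑ i, (ContinuousLinearMap.proj i : (Fin (n-1) → ℝ) →L[ℝ] ℝ) x *
            (ContinuousLinearMap.proj i : (Fin (n-1) → ℝ) →L[ℝ] ℝ) x := by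
      funext x; rw [hμ]; exact Finset.sum_congr rfl fun i _ => by simp [pow_two]
    rw [e1, hDt]
    convert h using 1
    case e'_12 => exact Finset.sum_congr rfl fun i _ => by simp [two_mul, add_smul]
    all_goals rfl
  have hinv : HasFDerivAt (fun x => (μ x)⁻¹)
      ((-ContinuousLinearMap.mulLeftRight ℝ ℝ (μ t)⁻¹ (μ t)⁻¹).comp Dt) t :=
    (hasFDerivAt_inv' hμt).comp t hmu
  have hc : HasFDerivAt (fun x => μ x + (μ x)⁻¹)
      (Dt + (-ContinuousLinearMap.mulLeftRight ℝ ℝ (μ t)⁻¹ (μ t)⁻¹).comp Dt) t := hmu.add hinv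
  have h1 : HasFDerivAt (fun x : Fin (n-1) → ℝ => (μ x + (μ x)⁻¹) • x)
      ((μ t + (μ t)⁻¹) • ContinuousLinearMap.id ℝ (Fin (n-1) → ℝ)
        + (Dt + (-ContinuousLinearMap.mulLeftRight ℝ ℝ (μ t)⁻¹ (μ t)⁻¹).comp Dt).smulRight t) t :=
    hc.smul (hasFDerivAt_id t)
  have h2 : HasFDerivAt (fun x : Fin (n-1) → ℝ => μ x • x)
      (μ t • ContinuousLinearMap.id ℝ (Fin (n-1) → ℝ) + Dt.smulRight t) t :=
    hmu.smul (hasFDerivAt_id t)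
  have hG : HasFDerivAt Γ
      (((μ t + (μ t)⁻¹) • ContinuousLinearMap.id ℝ (Fin (n-1) → ℝ)
        + (Dt + (-ContinuousLinearMap.mulLeftRight ℝ ℝ (μ t)⁻¹ (μ t)⁻¹).comp Dt).smulRight t).prod
        (μ t • ContinuousLinearMap.id ℝ (Fin (n-1) → ℝ) + Dt.smulRight t)) t := by
    have e : Γ = fun x => ((μ x + (μ x)⁻¹) • x, μ x • x) := funext hΓ
    rw [e]; exact h1.prodMk h2
  rw [hG.fderiv, hω]
  simp only [ContinuousLinearMap.prod_apply, ContinuousLinearMap.add_apply,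
    ContinuousLinearMap.smul_apply, ContinuousLinearMap.coe_id', id_eq,
    ContinuousLinearMap.smulRight_apply, ContinuousLinearMap.coe_comp', Function.comp_apply,
    ContinuousLinearMap.neg_apply, ContinuousLinearMap.mulLeftRight_apply, hDt,
    ContinuousLinearMap.sum_apply, ContinuousLinearMap.proj_apply, Pi.add_apply,
    Pi.smul_apply, smul_eq_mul]
  have hA : (∑ x, 2 * t x * v x) = 2 * ∑ x, t x * v x := by
    rw [Finset.mul_sum]; exact Finset.sum_congr rfl fun i _ => by ring
  have hB : (∑ x, 2 * t x * w x) = 2 * ∑ x, t x * w x := by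
    rw [Finset.mul_sum]; exact Finset.sum_congr rfl fun i _ => by ring
  rw [hA, hB]
  set m := μ t
  set a := ∑ x, t x * v x with ha
  set b := ∑ x, t x * w x with hb
  have step : ∀ i ∈ (univ : Finset (Fin (n-1))),
      ((m * v i + 2 * a * t i) *
          ((m + m⁻¹) * w i + (2 * b + -((m⁻¹ * (2 * b)) * m⁻¹)) * t i) -
        (m * w i + 2 * b * t i) *
          ((m + m⁻¹) * v i + (2 * a + -((m⁻¹ * (2 * a)) * m⁻¹)) * t i))
      = (2 * a * m⁻¹ + 2 * a * m * (m⁻¹ * m⁻¹)) * (t i * w i)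
        + (-(2 * b * m⁻¹) - 2 * b * m * (m⁻¹ * m⁻¹)) * (t i * v i) := fun i _ => by ring
  rw [Finset.sum_congr rfl step, Finset.sum_add_distrib, ← Finset.mul_sum, ← Finset.mul_sum,
    ← ha, ← hb]
  ring
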